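/- If G is a connected simple graph that is not complete, then there exists a nonedge uv of G such that contracting uv (identifying u and v) does not increase the chromatic number; i.e., χ(G/uv) = χ(G). -/

import Mathlib

open SimpleGraph

/-- Simple-graph contraction identifying vertex `v` into vertex `u`
(the merged vertex is `u`; vertex `v` is removed). -/
def SimpleGraph.contractPair {V : Type*} (G : SimpleGraph V) (u v : V) :
    SimpleGraph {x : V // x ≠ v} where
  Adj x y := (x : V) ≠ (y : V) ∧
    (G.Adj x y ∨ ((x : V) = u ∧ G.Adj v y) ∨ ((y : V) = u ∧ G.Adj x v))
  symm := by
    refine ⟨?_⟩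
    rintro x y ⟨hne, h⟩
    refine ⟨hne.symm, ?_⟩
    rcases h with h | ⟨hx, hv⟩ | ⟨hy, hv⟩
    · exact Or.inl h.symm
    · exact Or.inr (Or.inr ⟨hx, hv.symm⟩)
    · exact Or.inr (Or.inl ⟨hy, hv.symm⟩)
  loopless := by refine ⟨?_⟩; rintro x ⟨h, -⟩; exact h rfl

/-- `H` is a minor of `G`: branch-set (model) definition. -/
def SimpleGraph.IsMinor {V W : Type*} (G : SimpleGraph V) (H : SimpleGraph W) : Prop :=
  ∃ f : W → Set V,
    (∀ w, (f w).Nonempty) ∧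
    (∀ w, (G.induce (f w)).Connected) ∧
    (∀ w w', w ≠ w' → Disjoint (f w) (f w')) ∧
    (∀ w w', H.Adj w w' → ∃ a ∈ f w, ∃ b ∈ f w', G.Adj a b)

/-- The Hadwiger number: the largest `t` with a `K_t` minor. -/
noncomputable def SimpleGraph.hadwigerNumber {V : Type*} (G : SimpleGraph V) : ℕ :=
  sSup {t | G.IsMinor (⊤ : SimpleGraph (Fin t))}

/-- `s` induces a cycle (of length ≥ 3) in `G`. -/
def SimpleGraph.IsInducedCycle {V : Type*} (G : SimpleGraph V) (s : Set V) : Prop :=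
  ∃ n, 3 ≤ n ∧ Nonempty ((G.induce s) ≃g SimpleGraph.cycleGraph n)

/-- The set of induced cycles of `G`, as vertex sets. -/
def SimpleGraph.inducedCycles {V : Type*} (G : SimpleGraph V) : Set (Set V) :=
  {s | G.IsInducedCycle s}


theorem stmt2 {V : Type*} [Fintype V] (G : SimpleGraph V)
    (hconn : G.Connected) (hnc : G ≠ ⊤) :
    ∃ u v : V, u ≠ v ∧ ¬ G.Adj u v ∧
      (G.contractPair u v).chromaticNumber = G.chromaticNumber := by
  classical
  -- G ≠ ⊤ gives a nonadjacent pair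
  obtain ⟨a, b, hab, hnadj⟩ : ∃ a b : V, a ≠ b ∧ ¬ G.Adj a b := by
    by_contra h
    push_neg at h
    apply hnc
    ext x y
    simp only [top_adj]
    exact ⟨fun h' => h'.ne, fun hne => h x y hne⟩
  -- G is colorable with fewer than card V colors
  have hVne : Nonempty V := ⟨a⟩
  have hcard : 1 ≤ Fintype.card V := Fintype.card_pos
  have hcol1 : G.Colorable (Fintype.card V - 1) := by
    have hcardeq : Fintype.card {x : V // x ≠ b} = Fintype.card V - 1 := by
      simp [Fintype.card_subtype_compl]
    have hc : G.Colorable (Fintype.card {x : V // x ≠ b}) := by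
      refine Coloring.colorable (Coloring.mk (α := {x : V // x ≠ b})
        (fun x => if h : x = b then ⟨a, hab⟩ else ⟨x, h⟩) ?_)
      intro x y hadj hxy
      by_cases hx : x = b <;> by_cases hy : y = b
      · exact hadj.ne (hx.trans hy.symm)
      · subst hx
        simp only [dif_pos, dif_neg hy] at hxy
        have hay : a = y := congrArg Subtype.val hxy
        subst hay
        exact hnadj hadj.symm
      · subst hy
        simp only [dif_neg hx, dif_pos] at hxy
        have hxa : x = a := congrArg Subtype.val hxy
        subst hxa
        exact hnadj hadj
      · simp only [dif_neg hx, dif_neg hy] at hxy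
        exact hadj.ne (congrArg Subtype.val hxy)
    rwa [hcardeq] at hc
  set m : ℕ := ENat.toNat G.chromaticNumber with hm
  have hcolm : G.Colorable m := G.colorable_chromaticNumber_of_fintype
  have hchrom : G.chromaticNumber = (m : ℕ∞) := by
    rw [hm, ENat.coe_toNat]
    rw [chromaticNumber_ne_top_iff_exists]
    exact ⟨_, hcol1⟩
  have hmlt : m < Fintype.card V := by
    have h1 : G.chromaticNumber ≤ ((Fintype.card V - 1 : ℕ) : ℕ∞) :=
      chromaticNumber_le_iff_colorable.mpr hcol1
    rw [hchrom, Nat.cast_le] at h1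
    omega
  obtain ⟨C⟩ := hcolm
  -- pigeonhole: two vertices with the same color
  have hninj : ¬ Function.Injective C := by
    intro hinj
    have := Fintype.card_le_of_injective C hinj
    simp at this
    omega
  rw [Function.not_injective_iff] at hninj
  obtain ⟨u, v, hCuv, huv⟩ := hninj
  have hnadjuv : ¬ G.Adj u v := fun h => C.valid h hCuv
  refine ⟨u, v, huv, hnadjuv, le_antisymm ?_ ?_⟩
  · -- χ(G/uv) ≤ m = χ(G)
    rw [hchrom, chromaticNumber_le_iff_colorable]
    refine ⟨Coloring.mk (fun x => C x) ?_⟩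
    rintro ⟨x, hx⟩ ⟨y, hy⟩ ⟨hne, hadj⟩ hCxy
    simp only at hCxy
    rcases hadj with h | ⟨hxu, h⟩ | ⟨hyu, h⟩
    · exact C.valid h hCxy
    · apply C.valid h
      have hxu' : x = u := hxu
      rw [← hCuv, ← hxu']; exact hCxy
    · apply C.valid h
      have hyu' : y = u := hyu
      rw [hCxy, hyu', hCuv]
  · -- χ(G) ≤ χ(G/uv)
    apply chromaticNumber_le_of_forall_imp
    intro n ⟨D⟩
    refine ⟨Coloring.mk (fun x => if h : x = v then D ⟨u, huv⟩ else D ⟨x, h⟩) ?_⟩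
    intro x y hadj hDxy
    by_cases hx : x = v <;> by_cases hy : y = v
    · exact hadj.ne (hx.trans hy.symm)
    · simp only [dif_pos hx, dif_neg hy] at hDxy
      refine D.valid (G := G.contractPair u v) ?_ hDxy
      refine ⟨?_, Or.inr (Or.inl ⟨rfl, ?_⟩)⟩
      · intro h
        have h' : u = y := h
        apply hnadjuv
        rw [h']; rw [hx] at hadj; exact hadj.symm
      · show G.Adj v y
        rw [hx] at hadj; exact hadj
    · simp only [dif_neg hx, dif_pos hy] at hDxy
      refine D.valid (G := G.contractPair u v) ?_ hDxy
      refine ⟨?_, Or.inr (Or.inr ⟨rfl, ?_⟩)⟩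
      · intro h
        have h' : x = u := h
        apply hnadjuv
        rw [← h']; rw [hy] at hadj; exact hadj
      · show G.Adj x v
        rw [hy] at hadj; exact hadj
    · simp only [dif_neg hx, dif_neg hy] at hDxy
      exact D.valid (G := G.contractPair u v) ⟨by simpa using hadj.ne, Or.inl hadj⟩ hDxy
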